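/- Let g : [1,∞) → [0,∞) be C² and bounded with g(t) → 0 as t → ∞, satisfying g''(t) + g'(t) - μ g(t) ≥ -C e^{-2σt} where μ > 4σ² > 0 and C > 0. Then g(t) ≤ C' e^{-2σt} for all t ≥ 1, where C' depends on C, μ, σ and g(1). -/

import Mathlib

open Real Filter Set

private lemma exp_deriv_aux14 (A σ : ℝ) (t : ℝ) :
    HasDerivAt (fun t => A * Real.exp (-2 * σ * t)) (A * (-2 * σ) * Real.exp (-2 * σ * t)) t := by
  have h1 : HasDerivAt (fun t : ℝ => -2 * σ * t) (-2 * σ) t := by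
    simpa using (hasDerivAt_id t).const_mul (-2 * σ)
  have h2 := (h1.exp).const_mul A
  exact h2.congr_deriv (by ring)

private lemma no_local_max14 (f f' : ℝ → ℝ) (t₀ c : ℝ)
    (hf : ∀ᶠ t in nhds t₀, HasDerivAt f (f' t) t)
    (hf' : HasDerivAt f' c t₀) (hc : 0 < c) (h0 : f' t₀ = 0)
    (hmax : IsLocalMax f t₀) : False := by
  have hslope : Tendsto (slope f' t₀) (nhdsWithin t₀ {t₀}ᶜ) (nhds c) :=
    hasDerivAt_iff_tendsto_slope.mp hf'
  have hslope' : Tendsto (slope f' t₀) (nhdsWithin t₀ (Ioi t₀)) (nhds c) :=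
    hslope.mono_left (nhdsWithin_mono _ (fun x hx => ne_of_gt hx))
  have hpos : ∀ᶠ t in nhdsWithin t₀ (Ioi t₀), 0 < slope f' t₀ t :=
    hslope'.eventually (eventually_gt_nhds hc)
  have hall : ∀ᶠ t in nhdsWithin t₀ (Ioi t₀),
      0 < slope f' t₀ t ∧ (HasDerivAt f (f' t) t ∧ f t ≤ f t₀) :=
    hpos.and (((hf.and hmax).filter_mono nhdsWithin_le_nhds))
  obtain ⟨u, hu, hsub⟩ := mem_nhdsGT_iff_exists_Ioo_subset.mp hall
  set b : ℝ := (t₀ + u) / 2 with hb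
  have hub : t₀ < u := hu
  have ht₀b : t₀ < b := by simp [hb]; linarith
  have hbu : b < u := by simp [hb]; linarith
  have hIoo : Ioo t₀ b ⊆ Ioo t₀ u := Ioo_subset_Ioo le_rfl hbu.le
  have hbmem : b ∈ Ioo t₀ u := ⟨ht₀b, hbu⟩
  -- f' positive on Ioo t₀ b
  have hf'pos : ∀ x ∈ Ioo t₀ b, 0 < f' x := by
    intro x hx
    have := (hsub (hIoo hx)).1
    rw [slope_def_field, h0, sub_zero] at this
    have hxt : 0 < x - t₀ := by linarith [hx.1]
    have := mul_pos this hxt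
    rw [div_mul_cancel₀] at this
    · exact this
    · linarith
  have hderiv : ∀ x ∈ Icc t₀ b, HasDerivAt f (f' x) x := by
    intro x hx
    rcases eq_or_lt_of_le hx.1 with h | h
    · subst h; exact hf.self_of_nhds
    · exact (hsub ⟨h, lt_of_le_of_lt hx.2 hbu⟩).2.1
  have hcont : ContinuousOn f (Icc t₀ b) := fun x hx =>
    ((hderiv x hx).continuousAt).continuousWithinAt
  have hmono : StrictMonoOn f (Icc t₀ b) := by
    apply strictMonoOn_of_deriv_pos (convex_Icc _ _) hcont
    intro x hx
    rw [interior_Icc] at hx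
    rw [(hderiv x (Ioo_subset_Icc_self hx)).deriv]
    exact hf'pos x hx
  have h1 : f t₀ < f b := hmono (left_mem_Icc.mpr ht₀b.le) (right_mem_Icc.mpr ht₀b.le) ht₀b
  have h2 : f b ≤ f t₀ := (hsub hbmem).2.2
  linarith

/-- Comparison principle: if `g ≥ 0` is bounded with `g → 0` at `∞` and
`g'' + g' - μ g ≥ -C e^{-2σt}` with `μ > 4σ² > 0`, then `g(t) ≤ C' e^{-2σt}`. -/
theorem stmt14 (μ σ C : ℝ) (hσ : 0 < σ) (hμ : 4 * σ ^ 2 < μ) (hC : 0 < C)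
    (g g' g'' : ℝ → ℝ)
    (hd1 : ∀ t ≥ (1:ℝ), HasDerivAt g (g' t) t)
    (hd2 : ∀ t ≥ (1:ℝ), HasDerivAt g' (g'' t) t)
    (hgpos : ∀ t ≥ (1:ℝ), 0 ≤ g t)
    (hbdd : ∃ M, ∀ t ≥ (1:ℝ), g t ≤ M)
    (hlim : Filter.Tendsto g Filter.atTop (nhds 0))
    (hineq : ∀ t ≥ (1:ℝ), -C * Real.exp (-2 * σ * t) ≤ g'' t + g' t - μ * g t) :
    ∃ C' > 0, ∀ t ≥ (1:ℝ), g t ≤ C' * Real.exp (-2 * σ * t) := by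
  have hden : 0 < μ + 2 * σ - 4 * σ ^ 2 := by nlinarith
  set A : ℝ := C / (μ + 2 * σ - 4 * σ ^ 2) + g 1 * Real.exp (2 * σ) with hAdef
  have hA0 : 0 < A := by
    have h1 : 0 < C / (μ + 2 * σ - 4 * σ ^ 2) := div_pos hC hden
    have h2 : 0 ≤ g 1 * Real.exp (2 * σ) := mul_nonneg (hgpos 1 le_rfl) (Real.exp_pos _).le
    rw [hAdef]; linarith
  refine ⟨A, hA0, ?_⟩
  by_contra hcon
  push_neg at hcon
  obtain ⟨t₁, ht₁, hgt⟩ := hcon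
  set h : ℝ → ℝ := fun t => g t - A * Real.exp (-2 * σ * t) with hdef
  set h' : ℝ → ℝ := fun t => g' t - A * (-2 * σ) * Real.exp (-2 * σ * t) with h'def
  set h'' : ℝ → ℝ := fun t => g'' t - A * (-2 * σ) * (-2 * σ) * Real.exp (-2 * σ * t) with h''def
  have hd1h : ∀ t ≥ (1:ℝ), HasDerivAt h (h' t) t := fun t ht =>
    (hd1 t ht).sub (exp_deriv_aux14 A σ t)
  have hd2h : ∀ t ≥ (1:ℝ), HasDerivAt h' (h'' t) t := fun t ht =>
    (hd2 t ht).sub (exp_deriv_aux14 (A * (-2 * σ)) σ t)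
  have hAC : C ≤ A * (μ + 2 * σ - 4 * σ ^ 2) := by
    rw [hAdef, add_mul, div_mul_cancel₀ _ (ne_of_gt hden)]
    have : 0 ≤ g 1 * Real.exp (2 * σ) * (μ + 2 * σ - 4 * σ ^ 2) :=
      mul_nonneg (mul_nonneg (hgpos 1 le_rfl) (Real.exp_pos _).le) hden.le
    linarith
  have hkey : ∀ t ≥ (1:ℝ), μ * h t ≤ h'' t + h' t := by
    intro t ht
    have h1 := hineq t ht
    have he : 0 < Real.exp (-2 * σ * t) := Real.exp_pos _
    have h2 := mul_le_mul_of_nonneg_right hAC he.le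
    simp only [hdef, h'def, h''def]
    nlinarith [h1, h2]
  -- h 1 ≤ 0
  have hh1 : h 1 ≤ 0 := by
    simp only [hdef]
    have : A * Real.exp (-2 * σ * 1) ≥ g 1 * Real.exp (2 * σ) * Real.exp (-2 * σ * 1) := by
      apply mul_le_mul_of_nonneg_right _ (Real.exp_pos _).le
      have : 0 < C / (μ + 2 * σ - 4 * σ ^ 2) := div_pos hC hden
      rw [hAdef]; linarith
    have hprod : g 1 * Real.exp (2 * σ) * Real.exp (-2 * σ * 1) = g 1 := by
      rw [mul_assoc, ← Real.exp_add]
      norm_num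
    linarith [this, hprod]
  -- h → 0 at ∞
  have hexp0 : Tendsto (fun t : ℝ => A * Real.exp (-2 * σ * t)) atTop (nhds 0) := by
    have l1 : Tendsto (fun t : ℝ => -2 * σ * t) atTop atBot := by
      apply Tendsto.const_mul_atTop_of_neg (by linarith : -2 * σ < 0) tendsto_id
    have := (Real.tendsto_exp_atBot.comp l1).const_mul A
    simpa using this
  have hlimh : Tendsto h atTop (nhds 0) := by
    have := hlim.sub hexp0
    simpa [hdef] using this
  have ht₁pos : 0 < h t₁ := by simp only [hdef]; linarith
  have hup : ∀ᶠ t in atTop, h t < h t₁ := hlimh.eventually_lt_const ht₁pos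
  obtain ⟨T, hT⟩ := eventually_atTop.mp hup
  set T' : ℝ := max T t₁ with hT'def
  have ht₁T' : t₁ ≤ T' := le_max_right _ _
  have hcont : ContinuousOn h (Icc 1 T') := fun x hx =>
    ((hd1h x hx.1).continuousAt).continuousWithinAt
  obtain ⟨t₀, ht₀mem, ht₀max⟩ := isCompact_Icc.exists_isMaxOn ⟨t₁, ht₁, ht₁T'⟩ hcont
  have ht₀pos : 0 < h t₀ := lt_of_lt_of_le ht₁pos (ht₀max ⟨ht₁, ht₁T'⟩)
  have ht₀1 : 1 < t₀ := by
    rcases eq_or_lt_of_le ht₀mem.1 with heq | hlt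
    · exfalso; rw [heq] at hh1; linarith
    · exact hlt
  have hglob : ∀ t ≥ (1:ℝ), h t ≤ h t₀ := by
    intro t ht
    rcases le_or_gt t T' with hle | hgt'
    · exact ht₀max ⟨ht, hle⟩
    · have : h t < h t₁ := hT t (le_trans (le_max_left _ _) hgt'.le)
      have h3 : h t₁ ≤ h t₀ := ht₀max ⟨ht₁, ht₁T'⟩
      linarith
  have hlocmax : IsLocalMax h t₀ := by
    filter_upwards [Ioi_mem_nhds ht₀1] with t ht
    exact hglob t (le_of_lt ht)
  have hd0 : h' t₀ = 0 := hlocmax.hasDerivAt_eq_zero (hd1h t₀ ht₀1.le)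
  have hc : 0 < h'' t₀ := by
    have := hkey t₀ ht₀1.le
    rw [hd0] at this
    nlinarith
  exact no_local_max14 h h' t₀ (h'' t₀)
    (by filter_upwards [Ioi_mem_nhds ht₀1] with t ht; exact hd1h t (le_of_lt ht))
    (hd2h t₀ ht₀1.le) hc hd0 hlocmax
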